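/- Let f : ℝⁿ → ℝ be convex and differentiable with coordinate-wise L-Lipschitz continuous gradient, μ₁-strongly convex in the 1-norm (0 < μ₁ < L), and minimizer x*. Suppose at each iteration the coordinate i_k satisfies |∇_{i_k}f(x^k)| ≥ ‖∇f(x^k)‖∞ − ε_k with ε_k ≥ 0, and x^{k+1} = x^k − (1/L)∇_{i_k}f(x^k)e_{i_k}. Then for every k, f(x^k) − f(x*) ≤ (1 − μ₁/L)^k [f(x⁰) − f(x*) + A_k], where A_k = Σ_{i=1}^{k} (1 − μ₁/L)^{−i} (ε_i √(2/L) √(f(x⁰) − f(x*)) + ε_i²/(2L)). -/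

import Mathlib

open scoped RealInnerProductSpace

lemma line_deriv {n : ℕ} (f : EuclideanSpace ℝ (Fin n) → ℝ)
    (f' : EuclideanSpace ℝ (Fin n) → EuclideanSpace ℝ (Fin n))
    (hf : ∀ x, HasGradientAt f (f' x) x)
    (z : EuclideanSpace ℝ (Fin n)) (i : Fin n) (t : ℝ) :
    HasDerivAt (fun s : ℝ => f (z + s • EuclideanSpace.single i 1))
      (f' (z + t • EuclideanSpace.single i 1) i) t := by
  have hc : HasDerivAt (fun s : ℝ => z + s • (EuclideanSpace.single i 1 : EuclideanSpace ℝ (Fin n)))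
      (EuclideanSpace.single i 1) t := by
    simpa using ((hasDerivAt_id t).smul_const (EuclideanSpace.single i 1 : EuclideanSpace ℝ (Fin n))).const_add z
  have := ((hf (z + t • EuclideanSpace.single i 1)).hasFDerivAt).comp_hasDerivAt t hc
  refine this.congr_deriv ?_
  simp [InnerProductSpace.toDual_apply_apply, real_inner_comm, EuclideanSpace.inner_single_left]

lemma descent {n : ℕ} (f : EuclideanSpace ℝ (Fin n) → ℝ)
    (f' : EuclideanSpace ℝ (Fin n) → EuclideanSpace ℝ (Fin n))
    (hf : ∀ x, HasGradientAt f (f' x) x) (L : ℝ) (hL : 0 < L)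
    (hlip : ∀ (x : EuclideanSpace ℝ (Fin n)) (α : ℝ) (i : Fin n),
      |f' (x + α • EuclideanSpace.single i 1) i - f' x i| ≤ L * |α|)
    (z : EuclideanSpace ℝ (Fin n)) (α : ℝ) (i : Fin n) :
    f (z + α • EuclideanSpace.single i 1) ≤ f z + α * f' z i + L / 2 * α ^ 2 := by
  set ψ : ℝ → ℝ := fun t => f (z + t • EuclideanSpace.single i 1)
      - (f z + t * f' z i + L / 2 * t ^ 2) with hψ
  have hψ0 : ψ 0 = 0 := by simp [hψ]
  have hd : ∀ t, HasDerivAt ψ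
      (f' (z + t • EuclideanSpace.single i 1) i - (f' z i + L * t)) t := by
    intro t
    have h1 := line_deriv f f' hf z i t
    have h2 : HasDerivAt (fun t : ℝ => f z + t * f' z i + L / 2 * t ^ 2)
        (f' z i + L * t) t := by
      have h0 := ((hasDerivAt_id t).mul_const (f' z i)).const_add (f z)
      have h3 := ((hasDerivAt_pow 2 t).const_mul (L / 2))
      refine (h0.add h3).congr_deriv ?_
      push_cast
      ring
    exact h1.sub h2
  have hdiff : ∀ t, DifferentiableAt ℝ ψ t := fun t => (hd t).differentiableAt
  have hcont : Continuous ψ := continuous_iff_continuousAt.2 fun t => (hdiff t).continuousAt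
  have key : ψ α ≤ 0 := by
    rcases le_total 0 α with h | h
    · have hanti : AntitoneOn ψ (Set.Icc 0 α) := by
        apply antitoneOn_of_deriv_nonpos (convex_Icc 0 α) hcont.continuousOn
          (fun t _ => (hdiff t).differentiableWithinAt)
        intro t ht
        rw [interior_Icc] at ht
        rw [(hd t).deriv]
        have hl := hlip z t i
        rw [abs_of_pos ht.1] at hl
        have := abs_le.1 hl
        linarith [this.2]
      have := hanti (Set.left_mem_Icc.2 h) (Set.right_mem_Icc.2 h) h
      simpa [hψ0] using this
    · have hmono : MonotoneOn ψ (Set.Icc α 0) := by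
        apply monotoneOn_of_deriv_nonneg (convex_Icc α 0) hcont.continuousOn
          (fun t _ => (hdiff t).differentiableWithinAt)
        intro t ht
        rw [interior_Icc] at ht
        rw [(hd t).deriv]
        have hl := hlip z t i
        rw [abs_of_neg ht.2] at hl
        have := abs_le.1 hl
        linarith [this.1]
      have := hmono (Set.left_mem_Icc.2 h) (Set.right_mem_Icc.2 h) h
      simpa [hψ0] using this
  have : f (z + α • EuclideanSpace.single i 1)
      - (f z + α * f' z i + L / 2 * α ^ 2) ≤ 0 := key
  linarith

lemma rec_bound (ρ : ℝ) (hρ : 0 < ρ) (δ E : ℕ → ℝ)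
    (h : ∀ k, δ (k + 1) ≤ ρ * δ k + E (k + 1)) :
    ∀ k, δ k ≤ ρ ^ k * (δ 0 + ∑ i ∈ Finset.Icc 1 k, (ρ ^ i)⁻¹ * E i) := by
  intro k
  induction k with
  | zero => simp
  | succ k IH =>
    have IH' : ρ * δ k ≤ ρ ^ (k + 1) * (δ 0 + ∑ i ∈ Finset.Icc 1 k, (ρ ^ i)⁻¹ * E i) := by
      have := mul_le_mul_of_nonneg_left IH hρ.le
      calc ρ * δ k ≤ ρ * (ρ ^ k * (δ 0 + ∑ i ∈ Finset.Icc 1 k, (ρ ^ i)⁻¹ * E i)) := this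
        _ = ρ ^ (k + 1) * (δ 0 + ∑ i ∈ Finset.Icc 1 k, (ρ ^ i)⁻¹ * E i) := by ring
    rw [Finset.sum_Icc_succ_top (Nat.succ_le_succ (Nat.zero_le k))]
    have hE : ρ ^ (k + 1) * ((ρ ^ (k + 1))⁻¹ * E (k + 1)) = E (k + 1) := by
      rw [← mul_assoc, mul_inv_cancel₀ (pow_ne_zero _ (ne_of_gt hρ)), one_mul]
    have expand : ρ ^ (k + 1) * (δ 0 + (∑ i ∈ Finset.Icc 1 k, (ρ ^ i)⁻¹ * E i
          + (ρ ^ (k + 1))⁻¹ * E (k + 1)))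
        = ρ ^ (k + 1) * (δ 0 + ∑ i ∈ Finset.Icc 1 k, (ρ ^ i)⁻¹ * E i) + E (k + 1) := by
      rw [show δ 0 + (∑ i ∈ Finset.Icc 1 k, (ρ ^ i)⁻¹ * E i + (ρ ^ (k+1))⁻¹ * E (k+1))
          = (δ 0 + ∑ i ∈ Finset.Icc 1 k, (ρ ^ i)⁻¹ * E i) + (ρ ^ (k+1))⁻¹ * E (k+1) from by ring,
        mul_add, hE]
    rw [expand]
    linarith [h k]

theorem approx_gauss_southwell_additive_L {n : ℕ}
    (f : EuclideanSpace ℝ (Fin n) → ℝ)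
    (hconv : ConvexOn ℝ Set.univ f)
    (f' : EuclideanSpace ℝ (Fin n) → EuclideanSpace ℝ (Fin n))
    (hf : ∀ x, HasGradientAt f (f' x) x)
    (L : ℝ) (hL : 0 < L)
    (hlip : ∀ (x : EuclideanSpace ℝ (Fin n)) (α : ℝ) (i : Fin n),
      |f' (x + α • EuclideanSpace.single i 1) i - f' x i| ≤ L * |α|)
    (μ₁ : ℝ) (hμ₁ : 0 < μ₁) (hμ₁L : μ₁ < L)
    (hsc : ∀ x y, f y ≥ f x + ⟪f' x, y - x⟫ + μ₁ / 2 * (∑ i, |y i - x i|) ^ 2)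
    (xs : EuclideanSpace ℝ (Fin n)) (hxs : ∀ y, f xs ≤ f y)
    (x : ℕ → EuclideanSpace ℝ (Fin n)) (ik : ℕ → Fin n)
    (ε : ℕ → ℝ) (hε : ∀ k, 0 ≤ ε k)
    (hrule : ∀ k, |f' (x k) (ik k)| ≥ (⨆ j, |f' (x k) j|) - ε (k + 1))
    (hstep : ∀ k, x (k + 1)
      = x k - ((1 / L) * f' (x k) (ik k)) • EuclideanSpace.single (ik k) 1) :
    ∀ k : ℕ, f (x k) - f xs ≤ (1 - μ₁ / L) ^ k *
      (f (x 0) - f xs +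
        ∑ i ∈ Finset.Icc 1 k, ((1 - μ₁ / L) ^ i)⁻¹ *
          (ε i * Real.sqrt (2 / L) * Real.sqrt (f (x 0) - f xs)
            + (ε i) ^ 2 / (2 * L))) := by
  rcases Nat.eq_zero_or_pos n with hn | hn
  · subst hn; exact (ik 0).elim0
  haveI : Nonempty (Fin n) := Fin.pos_iff_nonempty.1 hn
  obtain ⟨δ, hδk⟩ : ∃ g : ℕ → ℝ, ∀ k, g k = f (x k) - f xs := ⟨_, fun _ => rfl⟩
  obtain ⟨M, hMdef⟩ : ∃ g : ℕ → ℝ, ∀ k, g k = ⨆ j, |f' (x k) j| := ⟨_, fun _ => rfl⟩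
  have hδnn : ∀ k, 0 ≤ δ k := fun k => by rw [hδk k]; exact sub_nonneg.2 (hxs (x k))
  have hMle : ∀ k j, |f' (x k) j| ≤ M k := fun k j => by
    rw [hMdef k]
    exact le_ciSup (f := fun j => |f' (x k) j|) (Set.Finite.bddAbove (Set.finite_range _)) j
  have hM0 : ∀ k, 0 ≤ M k := fun k =>
    le_trans (abs_nonneg _) (hMle k (Classical.arbitrary _))
  -- single-coordinate square bound
  have hB : ∀ (z : EuclideanSpace ℝ (Fin n)) (i : Fin n),
      (f' z i) ^ 2 ≤ 2 * L * (f z - f xs) := by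
    intro z i
    have h1 := descent f f' hf L hL hlip z (-(f' z i / L)) i
    have h2 := hxs (z + (-(f' z i / L)) • EuclideanSpace.single i 1)
    have h3 : f xs ≤ f z - (f' z i) ^ 2 / (2 * L) := by
      calc f xs ≤ f z + (-(f' z i / L)) * f' z i + L / 2 * (-(f' z i / L)) ^ 2 :=
            le_trans h2 h1
        _ = f z - (f' z i) ^ 2 / (2 * L) := by field_simp; ring
    have h4 : (f' z i) ^ 2 / (2 * L) ≤ f z - f xs := by linarith
    rw [div_le_iff₀ (by positivity)] at h4
    linarith
  -- descent per step
  have hdec : ∀ k, δ (k + 1) ≤ δ k - (f' (x k) (ik k)) ^ 2 / (2 * L) := by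
    intro k
    have hs : x (k + 1)
        = x k + (-((1 / L) * f' (x k) (ik k))) • EuclideanSpace.single (ik k) 1 := by
      rw [hstep k, sub_eq_add_neg, ← neg_smul]
    have h1 := descent f f' hf L hL hlip (x k) (-((1 / L) * f' (x k) (ik k))) (ik k)
    rw [← hs] at h1
    have h2 : f (x (k + 1)) ≤ f (x k) - (f' (x k) (ik k)) ^ 2 / (2 * L) := by
      calc f (x (k + 1)) ≤ f (x k) + (-((1 / L) * f' (x k) (ik k))) * f' (x k) (ik k)
            + L / 2 * (-((1 / L) * f' (x k) (ik k))) ^ 2 := h1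
        _ = f (x k) - (f' (x k) (ik k)) ^ 2 / (2 * L) := by field_simp; ring
    rw [hδk (k + 1), hδk k]
    linarith
  -- monotone decrease
  have hδk0 : ∀ k, δ k ≤ δ 0 := by
    intro k; induction k with
    | zero => exact le_refl _
    | succ k IH =>
      have h2 : (0:ℝ) ≤ (f' (x k) (ik k)) ^ 2 / (2 * L) := by positivity
      linarith [hdec k]
  -- strong convexity lower bound on sup-norm of gradient
  have hMsq : ∀ k, 2 * μ₁ * δ k ≤ (M k) ^ 2 := by
    intro k
    obtain ⟨T, hT⟩ : ∃ t : ℝ, t = ∑ i, |xs i - (x k) i| := ⟨_, rfl⟩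
    have h1 : f xs ≥ f (x k) + ⟪f' (x k), xs - x k⟫ + μ₁ / 2 * T ^ 2 := by
      rw [hT]; exact hsc (x k) xs
    have hTnn : 0 ≤ T := hT ▸ Finset.sum_nonneg fun i _ => abs_nonneg _
    have hinner : -(M k * T) ≤ ⟪f' (x k), xs - x k⟫ := by
      have hie : ⟪f' (x k), xs - x k⟫ = ∑ i, f' (x k) i * (xs i - (x k) i) := by
        simp [PiLp.inner_apply, RCLike.inner_apply, conj_trivial]
        exact Finset.sum_congr rfl fun i _ => mul_comm _ _
      rw [hie, hT, Finset.mul_sum, ← Finset.sum_neg_distrib]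
      apply Finset.sum_le_sum
      intro i _
      have h2 := neg_abs_le (f' (x k) i * (xs i - (x k) i))
      rw [abs_mul] at h2
      have h3 : |f' (x k) i| * |xs i - (x k) i| ≤ M k * |xs i - (x k) i| :=
        mul_le_mul_of_nonneg_right (hMle k i) (abs_nonneg _)
      linarith
    have hd : δ k ≤ M k * T - μ₁ / 2 * T ^ 2 := by rw [hδk k]; linarith
    have hmul : μ₁ * δ k ≤ μ₁ * (M k * T - μ₁ / 2 * T ^ 2) :=
      mul_le_mul_of_nonneg_left hd hμ₁.le
    nlinarith [sq_nonneg (M k - μ₁ * T)]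
  -- sup-norm upper bound
  have hMbd : ∀ k, M k ≤ Real.sqrt (2 * L * δ 0) := by
    intro k
    rw [hMdef k]
    apply ciSup_le
    intro j
    rw [← Real.sqrt_sq_eq_abs]
    apply Real.sqrt_le_sqrt
    calc (f' (x k) j) ^ 2 ≤ 2 * L * (f (x k) - f xs) := hB (x k) j
      _ = 2 * L * δ k := by rw [hδk k]
      _ ≤ 2 * L * δ 0 := mul_le_mul_of_nonneg_left (hδk0 k) (by positivity)
  have hsqrt : Real.sqrt (2 * L * δ 0)
      = Real.sqrt (2 / L) * Real.sqrt (δ 0) * L := by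
    rw [show 2 * L * δ 0 = (2 / L * δ 0) * L ^ 2 by field_simp,
      Real.sqrt_mul (mul_nonneg (by positivity) (hδnn 0)) (L ^ 2),
      Real.sqrt_sq hL.le,
      Real.sqrt_mul (by positivity : (0:ℝ) ≤ 2 / L) (δ 0)]
  have hMbd' : ∀ k, M k ≤ Real.sqrt (2 / L) * Real.sqrt (δ 0) * L := fun k =>
    hsqrt ▸ hMbd k
  -- one-step recursion
  have hrec : ∀ k, δ (k + 1) ≤ (1 - μ₁ / L) * δ k
      + (ε (k + 1) * Real.sqrt (2 / L) * Real.sqrt (δ 0) + (ε (k + 1)) ^ 2 / (2 * L)) := by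
    intro k
    have ha1 : M k - ε (k + 1) ≤ |f' (x k) (ik k)| := by
      rw [hMdef k]; exact hrule k
    have ha2 : |f' (x k) (ik k)| ≤ M k := hMle k (ik k)
    have h0 : (0:ℝ) ≤ |f' (x k) (ik k)| := abs_nonneg _
    have hg2 : (M k) ^ 2 - 2 * ε (k + 1) * M k ≤ (f' (x k) (ik k)) ^ 2 := by
      have p1 : (0:ℝ) ≤ |f' (x k) (ik k)| * (|f' (x k) (ik k)| - (M k - ε (k + 1))) :=
        mul_nonneg h0 (by linarith)
      have p2 : (0:ℝ) ≤ M k * (|f' (x k) (ik k)| - (M k - ε (k + 1))) :=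
        mul_nonneg (hM0 k) (by linarith)
      have p3 : |f' (x k) (ik k)| * ε (k + 1) ≤ M k * ε (k + 1) :=
        mul_le_mul_of_nonneg_right ha2 (hε (k + 1))
      nlinarith [sq_abs (f' (x k) (ik k))]
    have hεM : ε (k + 1) * M k ≤ ε (k + 1) * (Real.sqrt (2 / L) * Real.sqrt (δ 0) * L) :=
      mul_le_mul_of_nonneg_left (hMbd' k) (hε (k + 1))
    have c1 : 2 * L * δ (k + 1) ≤ 2 * L * δ k - (f' (x k) (ik k)) ^ 2 := by
      calc 2 * L * δ (k + 1) ≤ 2 * L * (δ k - (f' (x k) (ik k)) ^ 2 / (2 * L)) :=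
            mul_le_mul_of_nonneg_left (hdec k) (by positivity)
        _ = 2 * L * δ k - (f' (x k) (ik k)) ^ 2 := by field_simp
    have c4 : 2 * (ε (k + 1) * M k) ≤ 2 * L * (ε (k + 1) * Real.sqrt (2 / L) * Real.sqrt (δ 0)) := by
      calc 2 * (ε (k + 1) * M k)
          ≤ 2 * (ε (k + 1) * (Real.sqrt (2 / L) * Real.sqrt (δ 0) * L)) := by linarith
        _ = 2 * L * (ε (k + 1) * Real.sqrt (2 / L) * Real.sqrt (δ 0)) := by ring
    have e1 : 2 * L * ((1 - μ₁ / L) * δ k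
        + (ε (k + 1) * Real.sqrt (2 / L) * Real.sqrt (δ 0) + (ε (k + 1)) ^ 2 / (2 * L)))
        = 2 * L * δ k - 2 * μ₁ * δ k
          + 2 * L * (ε (k + 1) * Real.sqrt (2 / L) * Real.sqrt (δ 0)) + (ε (k + 1)) ^ 2 := by
      field_simp
      ring
    have key : 2 * L * δ (k + 1) ≤ 2 * L * ((1 - μ₁ / L) * δ k
        + (ε (k + 1) * Real.sqrt (2 / L) * Real.sqrt (δ 0) + (ε (k + 1)) ^ 2 / (2 * L))) := by
      rw [e1]
      linarith [hMsq k, sq_nonneg (ε (k + 1))]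
    exact le_of_mul_le_mul_left key (by positivity)
  have hρ : (0:ℝ) < 1 - μ₁ / L := by
    have : μ₁ / L < 1 := (div_lt_one hL).2 hμ₁L
    linarith
  have final := rec_bound (1 - μ₁ / L) hρ δ
    (fun i => ε i * Real.sqrt (2 / L) * Real.sqrt (δ 0) + (ε i) ^ 2 / (2 * L)) hrec
  intro k
  have hk := final k
  simp only [hδk] at hk
  exact hk
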